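/- Derivative identity for hat-function imbeddings (formula (6.8) of the paper): For every finitely supported grid function u : ℤ^d → ℝ and every i ∈ {1,…,d}, the i-th partial derivative of the hat-function imbedding u(n) = Σ_m u_m ψ_m satisfies, for almost every x ∈ ℝ^d, ∂_i u(n)(x) = Σ_{m∈ℤ^d} (U_i u)_m · χ_{m,i,+}(x). -/

import Mathlib

open MeasureTheory

noncomputable section

/-- The canonical hat function on `ℝ`. -/
def hat (t : ℝ) : ℝ := max 0 (1 - |t|)

/-- The `i`-th coordinate of the grid-knot `x_m = v + h * r * m`. -/
def gridKnot (d : ℕ) (h : ℝ) (r : Fin d → ℕ) (v : Fin d → ℝ) (m : Fin d → ℤ) (i : Fin d) : ℝ :=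
  v i + h * (r i : ℝ) * (m i : ℝ)

/-- The `d`-dimensional hat function centered at the grid-knot `x_m`. -/
def psi (d : ℕ) (h : ℝ) (r : Fin d → ℕ) (v : Fin d → ℝ) (m : Fin d → ℤ) (x : Fin d → ℝ) : ℝ :=
  ∏ i, hat ((x i - gridKnot d h r v m i) / (h * (r i : ℝ)))

/-- The hat-function imbedding `u(n) = Σ_m u_m ψ_m`. -/
def imbed (d : ℕ) (h : ℝ) (r : Fin d → ℕ) (v : Fin d → ℝ) (u : (Fin d → ℤ) → ℝ)
    (x : Fin d → ℝ) : ℝ :=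
  ∑' m : Fin d → ℤ, u m * psi d h r v m x

/-- `vol(R) = r₁ ⋯ r_d`. -/
def volR (d : ℕ) (r : Fin d → ℕ) : ℝ := ∏ i, (r i : ℝ)

/-- Forward finite difference `(U_i u)_m = (u_{m+e_i} - u_m)/(r_i h)`. -/
def fdiff (d : ℕ) (h : ℝ) (r : Fin d → ℕ) (u : (Fin d → ℤ) → ℝ) (i : Fin d)
    (m : Fin d → ℤ) : ℝ :=
  (u (m + Pi.single i 1) - u m) / ((r i : ℝ) * h)

/-- The discrete norm `|u|²_{R2} = vol(R) Σ_m u_m²`. -/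
def norm2R (d : ℕ) (r : Fin d → ℕ) (u : (Fin d → ℤ) → ℝ) : ℝ :=
  volR d r * ∑' m : Fin d → ℤ, u m ^ 2

/-- The discrete Dirichlet form `q_R(u) = vol(R) Σ_i Σ_m (U_i u)_m²`. -/
def qR (d : ℕ) (h : ℝ) (r : Fin d → ℕ) (u : (Fin d → ℤ) → ℝ) : ℝ :=
  volR d r * ∑ i : Fin d, ∑' m : Fin d → ℤ, (fdiff d h r u i m) ^ 2


/-- `χ_{m,i,+}(x) = 1_{[(x_m)_i, (x_m)_i + r_i h)}(x_i) ∏_{j≠i} χ((x_j - (x_m)_j)/(h r_j))`. -/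
def chiPlus (d : ℕ) (h : ℝ) (r : Fin d → ℕ) (v : Fin d → ℝ) (m : Fin d → ℤ) (i : Fin d)
    (x : Fin d → ℝ) : ℝ :=
  (if gridKnot d h r v m i ≤ x i ∧ x i < gridKnot d h r v m i + (r i : ℝ) * h then 1 else 0) *
    ∏ j ∈ Finset.univ.erase i, hat ((x j - gridKnot d h r v m j) / (h * (r j : ℝ)))

/- ===== auxiliary material ===== -/

/-- The a.e.-derivative of the hat function. -/
def hatD (s : ℝ) : ℝ := if -1 < s ∧ s < 0 then 1 else if 0 < s ∧ s < 1 then -1 else 0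

lemma hat_eq_zero {t : ℝ} (ht : 1 ≤ |t|) : hat t = 0 := by
  unfold hat; rw [max_eq_left]; linarith

lemma hasDerivAt_hat {s : ℝ} (h1 : s ≠ -1) (h2 : s ≠ 0) (h3 : s ≠ 1) :
    HasDerivAt hat (hatD s) s := by
  rcases lt_trichotomy s 0 with hs | hs | hs
  · rcases lt_or_gt_of_ne h1 with hs1 | hs1
    · have hval : hatD s = 0 := by
        unfold hatD
        rw [if_neg (by rintro ⟨a, b⟩; linarith), if_neg (by rintro ⟨a, b⟩; linarith)]
      rw [hval]
      refine (hasDerivAt_const s (0:ℝ)).congr_of_eventuallyEq ?_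
      filter_upwards [Iio_mem_nhds hs1] with t ht
      exact hat_eq_zero (by rw [abs_of_neg (by simp at ht; linarith)]; simp at ht; linarith)
    · have hval : hatD s = 1 := by
        unfold hatD; rw [if_pos ⟨hs1, hs⟩]
      rw [hval]
      have : HasDerivAt (fun t : ℝ => 1 + t) 1 s := by
        simpa using (hasDerivAt_id s).const_add (1:ℝ)
      refine this.congr_of_eventuallyEq ?_
      filter_upwards [Ioo_mem_nhds hs1 hs] with t ht
      unfold hat
      rw [abs_of_neg ht.2, max_eq_right (by linarith [ht.1])]
      ring
  · exact absurd hs h2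
  · rcases lt_or_gt_of_ne h3 with hs1 | hs1
    · have hval : hatD s = -1 := by
        unfold hatD
        rw [if_neg (by rintro ⟨a, b⟩; linarith), if_pos ⟨hs, hs1⟩]
      rw [hval]
      have : HasDerivAt (fun t : ℝ => 1 - t) (-1) s := by
        simpa using (hasDerivAt_id s).const_sub (1:ℝ)
      refine this.congr_of_eventuallyEq ?_
      filter_upwards [Ioo_mem_nhds hs hs1] with t ht
      unfold hat
      rw [abs_of_pos ht.1, max_eq_right (by linarith [ht.2])]
    · have hval : hatD s = 0 := by
        unfold hatD
        rw [if_neg (by rintro ⟨a, b⟩; linarith), if_neg (by rintro ⟨a, b⟩; linarith)]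
      rw [hval]
      refine (hasDerivAt_const s (0:ℝ)).congr_of_eventuallyEq ?_
      filter_upwards [Ioi_mem_nhds hs1] with t ht
      exact hat_eq_zero (by rw [abs_of_pos (by simp at ht; linarith)]; simp at ht; linarith)

/-- Formula (6.8): for almost every `x`, the `i`-th partial derivative of the hat-function
imbedding `u(n)` equals `Σ_m (U_i u)_m χ_{m,i,+}(x)`. -/
theorem imbed_partialDeriv (d : ℕ) (hd : 1 ≤ d) (h : ℝ) (hh : 0 < h)
    (r : Fin d → ℕ) (hr : ∀ i, 0 < r i) (v : Fin d → ℝ)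
    (u : (Fin d → ℤ) → ℝ) (hu : (Function.support u).Finite) (i : Fin d) :
    ∀ᵐ x ∂(volume : Measure (Fin d → ℝ)),
      HasLineDerivAt ℝ (imbed d h r v u)
        (∑' m : Fin d → ℤ, fdiff d h r u i m * chiPlus d h r v m i x) x (Pi.single i 1) := by
  classical
  have hri : (0:ℝ) < (r i : ℝ) := by exact_mod_cast hr i
  set c : ℝ := h * (r i : ℝ) with hc
  have hc0 : 0 < c := mul_pos hh hri
  have hcr : (r i : ℝ) * h = c := mul_comm _ _
  set pe : Fin d → ℤ := Pi.single i 1 with hpe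
  set S : Finset (Fin d → ℤ) := hu.toFinset with hS
  set T : Finset (Fin d → ℤ) := S ∪ S.image (fun m => m - pe) with hT
  have hmemS : ∀ {m : Fin d → ℤ}, u m ≠ 0 → m ∈ S := fun hm => hu.mem_toFinset.2 hm
  have hmemT1 : ∀ {m : Fin d → ℤ}, u m ≠ 0 → m ∈ T :=
    fun hm => Finset.mem_union_left _ (hmemS hm)
  have hmemT2 : ∀ {m : Fin d → ℤ}, u (m + pe) ≠ 0 → m ∈ T := by
    intro m hm
    exact Finset.mem_union_right _ (Finset.mem_image.2 ⟨m + pe, hmemS hm, by simp⟩)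
  -- knot identities
  have hknot_sub : ∀ m : Fin d → ℤ, gridKnot d h r v (m - pe) i = gridKnot d h r v m i - c := by
    intro m
    simp only [gridKnot, hpe, Pi.sub_apply, Pi.single_eq_same, hc]
    push_cast
    ring
  have hknot_sub' : ∀ (m : Fin d → ℤ) (j : Fin d), j ≠ i →
      gridKnot d h r v (m - pe) j = gridKnot d h r v m j := by
    intro m j hj
    simp [gridKnot, hpe, Pi.single_apply, hj]
  -- a.e. good points
  have key : ∀ a : ℝ, ∀ᵐ x : Fin d → ℝ ∂volume, x i ≠ a := by
    intro a; rw [volume_pi]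
    exact MeasureTheory.Measure.ae_eval_ne (α := fun _ : Fin d => ℝ) (fun _ => volume) i a
  have hae : ∀ᵐ x : Fin d → ℝ ∂volume, ∀ m ∈ (T : Set (Fin d → ℤ)),
      x i ≠ gridKnot d h r v m i ∧ x i ≠ gridKnot d h r v m i - c ∧
      x i ≠ gridKnot d h r v m i + c := by
    rw [MeasureTheory.ae_ball_iff T.countable_toSet]
    intro m _
    exact (key _).and ((key _).and (key _))
  filter_upwards [hae] with x hx
  -- abbreviations
  set P : (Fin d → ℤ) → ℝ :=
    fun m => ∏ j ∈ Finset.univ.erase i, hat ((x j - gridKnot d h r v m j) / (h * (r j : ℝ)))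
    with hP
  set K : (Fin d → ℤ) → ℝ := fun m => gridKnot d h r v m i with hK
  -- chiPlus facts
  have hchi : ∀ m : Fin d → ℤ, chiPlus d h r v m i x
      = (if K m ≤ x i ∧ x i < K m + c then 1 else 0) * P m := by
    intro m
    rw [chiPlus, hcr]
  have hPshift : ∀ m : Fin d → ℤ, P (m - pe) = P m := by
    intro m
    apply Finset.prod_congr rfl
    intro j hj
    rw [hknot_sub' m j (Finset.mem_erase.1 hj).1]
  have hchi_shift : ∀ m : Fin d → ℤ, chiPlus d h r v (m - pe) i x
      = (if K m - c ≤ x i ∧ x i < K m then 1 else 0) * P m := by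
    intro m
    rw [hchi, hPshift]
    congr 2
    rw [hK]
    simp only [hknot_sub m]
    rw [sub_add_cancel]
  -- rewrite the tsum as a finite sum
  have hrhs : (∑' m : Fin d → ℤ, fdiff d h r u i m * chiPlus d h r v m i x)
      = ∑ m ∈ T, fdiff d h r u i m * chiPlus d h r v m i x := by
    refine tsum_eq_sum ?_
    intro m hm
    have h1 : u m = 0 := by by_contra h'; exact hm (hmemT1 h')
    have h2 : u (m + pe) = 0 := by by_contra h'; exact hm (hmemT2 h')
    simp [fdiff, ← hpe, h1, h2]
  have himbed : imbed d h r v u = fun y => ∑ m ∈ T, u m * psi d h r v m y := by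
    funext y
    refine tsum_eq_sum ?_
    intro m hm
    have h1 : u m = 0 := by by_contra h'; exact hm (hmemT1 h')
    rw [h1, zero_mul]
  rw [hrhs, himbed]
  show HasDerivAt
    (fun t : ℝ => ∑ m ∈ T, u m * psi d h r v m (x + t • (Pi.single i 1 : Fin d → ℝ)))
    (∑ m ∈ T, fdiff d h r u i m * chiPlus d h r v m i x) 0
  -- per-term derivative
  have key2 : ∀ m ∈ T, HasDerivAt
      (fun t : ℝ => u m * psi d h r v m (x + t • (Pi.single i 1 : Fin d → ℝ)))
      (u m * (hatD ((x i - K m) / c) * (1 / c) * P m)) 0 := by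
    intro m hm
    have hfun : (fun t : ℝ => u m * psi d h r v m (x + t • (Pi.single i 1 : Fin d → ℝ)))
        = fun t : ℝ => u m * (hat ((x i + t - K m) / c) * P m) := by
      funext t
      congr 1
      rw [psi, ← Finset.mul_prod_erase Finset.univ _ (Finset.mem_univ i)]
      congr 1
      · rw [hK, hc]
        congr 2
        simp
      · apply Finset.prod_congr rfl
        intro j hj
        have hj' : j ≠ i := (Finset.mem_erase.1 hj).1
        congr 2
        simp [Pi.single_apply, hj']
    rw [hfun]
    obtain ⟨hne0, hneM, hneP⟩ := hx m hm
    have hs1 : (x i - K m) / c ≠ -1 := by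
      intro hcon
      rw [div_eq_iff hc0.ne'] at hcon
      simp only [hK] at hcon
      exact hneM (by linarith)
    have hs2 : (x i - K m) / c ≠ 0 := by
      rw [div_ne_zero_iff]
      exact ⟨sub_ne_zero.2 (by rw [hK]; exact hne0), hc0.ne'⟩
    have hs3 : (x i - K m) / c ≠ 1 := by
      intro hcon
      rw [div_eq_iff hc0.ne'] at hcon
      simp only [hK] at hcon
      exact hneP (by linarith)
    have hhat := hasDerivAt_hat hs1 hs2 hs3
    have hinner : HasDerivAt (fun t : ℝ => (x i + t - K m) / c) (1 / c) 0 := by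
      simpa using (((hasDerivAt_id (0:ℝ)).const_add (x i)).sub_const (K m)).div_const c
    have hhat' : HasDerivAt hat (hatD ((x i - K m) / c))
        ((fun t : ℝ => (x i + t - K m) / c) 0) := by
      simpa using hhat
    have hcomp : HasDerivAt (fun t : ℝ => hat ((x i + t - K m) / c))
        (hatD ((x i - K m) / c) * (1 / c)) 0 := by have := hhat'.comp 0 hinner; exact this
    exact (hcomp.mul_const (P m)).const_mul (u m)
  have hsum := HasDerivAt.fun_sum key2
  refine hsum.congr_deriv (Eq.symm ?_)
  -- the algebraic identity
  have hhatD : ∀ m ∈ T, hatD ((x i - K m) / c)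
      = (if K m - c ≤ x i ∧ x i < K m then 1 else 0)
        - (if K m ≤ x i ∧ x i < K m + c then 1 else 0) := by
    intro m hm
    obtain ⟨hne0, hneM, hneP⟩ := hx m hm
    have hne0' : x i ≠ K m := by rw [hK]; exact hne0
    have hneM' : x i ≠ K m - c := by rw [hK]; exact hneM
    have hneP' : x i ≠ K m + c := by rw [hK]; exact hneP
    have e1 : (-1 < (x i - K m) / c ∧ (x i - K m) / c < 0) ↔ (K m - c ≤ x i ∧ x i < K m) := by
      rw [lt_div_iff₀ hc0, div_lt_iff₀ hc0]
      constructor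
      · rintro ⟨a, b⟩; exact ⟨by nlinarith, by nlinarith⟩
      · rintro ⟨a, b⟩
        have : K m - c < x i := lt_of_le_of_ne a (Ne.symm hneM')
        exact ⟨by nlinarith, by nlinarith⟩
    have e2 : (0 < (x i - K m) / c ∧ (x i - K m) / c < 1) ↔ (K m ≤ x i ∧ x i < K m + c) := by
      rw [lt_div_iff₀ hc0, div_lt_iff₀ hc0]
      constructor
      · rintro ⟨a, b⟩; exact ⟨by nlinarith, by nlinarith⟩
      · rintro ⟨a, b⟩
        have : K m < x i := lt_of_le_of_ne a (Ne.symm hne0')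
        exact ⟨by nlinarith, by nlinarith⟩
    unfold hatD
    simp only [e1, e2]
    split_ifs with hA hB hB
    · exfalso; linarith [hA.2, hB.1]
    · norm_num
    · norm_num
    · norm_num
  -- rewrite each derivative term
  have hterm : ∀ m ∈ T, u m * (hatD ((x i - K m) / c) * (1 / c) * P m)
      = (u m / c) * chiPlus d h r v (m - pe) i x - (u m / c) * chiPlus d h r v m i x := by
    intro m hm
    rw [hhatD m hm, hchi_shift, hchi]
    ring
  rw [Finset.sum_congr rfl hterm, Finset.sum_sub_distrib]
  -- reindex the shifted sum
  have hinj : ∀ a ∈ T, ∀ b ∈ T, a - pe = b - pe → a = b := by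
    intro a _ b _ hab
    exact sub_left_inj.mp hab
  have hre : ∑ m ∈ T, (u m / c) * chiPlus d h r v (m - pe) i x
      = ∑ m ∈ T.image (fun m => m - pe), (u (m + pe) / c) * chiPlus d h r v m i x := by
    rw [Finset.sum_image hinj]
    apply Finset.sum_congr rfl
    intro m _
    rw [sub_add_cancel]
  have hshiftT : ∑ m ∈ T.image (fun m => m - pe), (u (m + pe) / c) * chiPlus d h r v m i x
      = ∑ m ∈ T, (u (m + pe) / c) * chiPlus d h r v m i x := by
    have h1 : ∑ m ∈ T.image (fun m => m - pe), (u (m + pe) / c) * chiPlus d h r v m i x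
        = ∑ m ∈ T ∪ T.image (fun m => m - pe), (u (m + pe) / c) * chiPlus d h r v m i x := by
      apply Finset.sum_subset Finset.subset_union_right
      intro m _ hm
      have : u (m + pe) = 0 := by
        by_contra h'
        apply hm
        refine Finset.mem_image.2 ⟨m + pe, ?_, by abel⟩
        exact Finset.mem_union_left _ (hmemS h')
      rw [this]; ring
    have h2 : ∑ m ∈ T, (u (m + pe) / c) * chiPlus d h r v m i x
        = ∑ m ∈ T ∪ T.image (fun m => m - pe), (u (m + pe) / c) * chiPlus d h r v m i x := by
      apply Finset.sum_subset Finset.subset_union_left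
      intro m _ hm
      have : u (m + pe) = 0 := by
        by_contra h'
        exact hm (hmemT2 h')
      rw [this]; ring
    rw [h1, ← h2]
  rw [hre, hshiftT, ← Finset.sum_sub_distrib]
  apply Finset.sum_congr rfl
  intro m _
  rw [fdiff, ← hpe, hcr]
  ring
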